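/- arXiv:1601.06591 — 4 statements merged into one kernel-verified Lean document; each statement's English description precedes it below -/
import Mathlib

section
/- Let φ : Σ → (−∞, 0] be a locally Hölder potential on the full shift Σ = ℕ^ℕ with pressure P(φ) = 0, and let s = inf{t : P(tφ) = ∞} < ∞. For any t > s there exists K(t) > 0 such that for every ergodic shift-invariant probability measure μ for which φ is integrable and h(μ, σ) > K(t), one has h(μ, σ) + t ∫ φ dμ < 0. -/
open Filter MeasureTheory

noncomputable section

/-- The left shift on `Σ = ℕ^ℕ`. -/
def shift (x : ℕ → ℕ) : ℕ → ℕ := fun n => x (n + 1)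

/-- Let `φ ≤ 0` be locally Hölder with pressure `P(φ) = 0` and
`s = inf{t : P(tφ) = ∞} < ∞`.  Then for any `t > s` there is `K(t) > 0` such that every
ergodic shift-invariant probability measure `μ` with `φ` integrable and `h(μ,σ) > K(t)`
satisfies `h(μ,σ) + t ∫ φ dμ < 0`. -/
theorem high_entropy_negative_pressure (φ : (ℕ → ℕ) → ℝ)
    (hφle : ∀ x, φ x ≤ 0)
    (hloc : ∃ C > (0:ℝ), ∃ δ ∈ Set.Ioo (0:ℝ) 1, ∀ n : ℕ, 1 ≤ n →
      ∀ x y : ℕ → ℕ, (∀ m < n, x m = y m) → |φ x - φ y| ≤ C * δ ^ n)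
    (Press : ℝ → EReal) (entH : Measure (ℕ → ℕ) → ℝ)
    (hP1 : Press 1 = 0)
    (hVP : ∀ t : ℝ, ∀ μ : Measure (ℕ → ℕ), IsProbabilityMeasure μ → Ergodic shift μ →
      Integrable φ μ → ((entH μ + t * ∫ x, φ x ∂μ : ℝ) : EReal) ≤ Press t)
    (s : ℝ)
    (hs₁ : ∀ t : ℝ, s < t → Press t ≠ ⊤)
    (hs₂ : ∀ t : ℝ, t < s → Press t = ⊤) :
    ∀ t : ℝ, s < t → ∃ K : ℝ, 0 < K ∧
      ∀ μ : Measure (ℕ → ℕ), IsProbabilityMeasure μ → Ergodic shift μ →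
        Integrable φ μ → K < entH μ → entH μ + t * ∫ x, φ x ∂μ < 0 := by
  intro t ht
  have hst' : s < (s + t) / 2 := by linarith
  have ht't : (s + t) / 2 < t := by linarith
  set t' : ℝ := (s + t) / 2 with ht'def
  have hPne : Press t' ≠ ⊤ := hs₁ t' hst'
  set M : ℝ := (Press t').toReal with hMdef
  have hPle : Press t' ≤ (M : EReal) := by
    rcases eq_or_ne (Press t') ⊥ with h | h
    · rw [h]; exact bot_le
    · rw [hMdef, EReal.coe_toReal hPne h]
  refine ⟨max (M * t / (t - t')) (max M 0) + 1, ?_, ?_⟩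
  · have h1 : (0:ℝ) ≤ max M 0 := le_max_right _ _
    have h2 := le_max_right (M * t / (t - t')) (max M 0)
    linarith
  · intro μ hprob herg hint hK
    have hI : ∫ x, φ x ∂μ ≤ 0 := integral_nonpos hφle
    have h1E := (hVP t' μ hprob herg hint).trans hPle
    have h1 : entH μ + t' * ∫ x, φ x ∂μ ≤ M := by exact_mod_cast h1E
    have hKM : M < entH μ := by
      have h2 := le_max_right (M * t / (t - t')) (max M 0)
      have h3 : M ≤ max M 0 := le_max_left _ _
      linarith
    rcases le_or_gt t' 0 with hneg | hpos
    · exfalso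
      nlinarith [mul_nonneg (neg_nonneg.mpr hneg) (neg_nonneg.mpr hI)]
    · have htt' : 0 < t - t' := by linarith
      have hKM2 : M * t / (t - t') < entH μ := by
        have h2 := le_max_left (M * t / (t - t')) (max M 0)
        linarith
      have hB : M * t < entH μ * (t - t') := (div_lt_iff₀ htt').mp hKM2
      have htpos : (0:ℝ) < t := lt_trans hpos ht't
      have hA := mul_le_mul_of_nonneg_left h1 htpos.le
      nlinarith [hA, hB, hpos]
end
end

section
/- Let φ, ψ : {0,1}^ℕ → ℝ be potentials with summable variations and C = 2·max(Σ_{k≥1} var_k(φ), Σ_{k≥1} var_k(ψ)) + 2·max(var_0(φ), var_0(ψ)). If two level-n words x, y differ in exactly one coordinate, then for all ω, τ ∈ [x] ∪ [y] one has |S_n φ(ω) − S_n φ(τ)| ≤ C and |S_n ψ(ω) − S_n ψ(τ)| ≤ C. -/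
open Filter

noncomputable section

/-- The left shift on the full shift over two symbols. -/
def shift2 (x : ℕ → Fin 2) : ℕ → Fin 2 := fun n => x (n + 1)

/-- Birkhoff sum `S_n h`. -/
def birk2 (h : (ℕ → Fin 2) → ℝ) (n : ℕ) (x : ℕ → Fin 2) : ℝ :=
  ∑ i ∈ Finset.range n, h (shift2^[i] x)

lemma shift2_iter (x : ℕ → Fin 2) (i m : ℕ) : shift2^[i] x m = x (m + i) := by
  induction i generalizing x with
  | zero => simp
  | succ i ih =>
    rw [Function.iterate_succ_apply, ih]
    simp only [shift2]
    ring_nf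

lemma birk_helper (h : (ℕ → Fin 2) → ℝ) (v : ℕ → ℝ) (hv0 : ∀ k, 0 ≤ v k)
    (hvar : ∀ k : ℕ, ∀ a b : ℕ → Fin 2, (∀ m < k, a m = b m) → |h a - h b| ≤ v k)
    (hsum : Summable fun k => v (k + 1))
    (n j : ℕ) (hjn : j < n) (ω τ : ℕ → Fin 2)
    (hagree : ∀ m, m < n → m ≠ j → ω m = τ m) :
    |birk2 h n ω - birk2 h n τ| ≤ 2 * (∑' k, v (k + 1)) + v 0 := by
  have key : ∀ i, |h (shift2^[i] ω) - h (shift2^[i] τ)| ≤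
      if i ≤ j then v (j - i) else v (n - i) := by
    intro i
    split
    · apply hvar
      intro m hm
      rw [shift2_iter, shift2_iter]
      exact hagree _ (by omega) (by omega)
    · apply hvar
      intro m hm
      rw [shift2_iter, shift2_iter]
      exact hagree _ (by omega) (by omega)
  have h1 : ∑ i ∈ Finset.range (j + 1), v (j - i) ≤ (∑' k, v (k + 1)) + v 0 := by
    have hrefl := Finset.sum_range_reflect v (j + 1)
    simp only [Nat.add_sub_cancel] at hrefl
    rw [hrefl, Finset.sum_range_succ']
    have : ∑ k ∈ Finset.range j, v (k + 1) ≤ ∑' k, v (k + 1) :=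
      Summable.sum_le_tsum _ (fun k _ => hv0 _) hsum
    linarith
  have h2 : ∑ i ∈ Finset.Ico (j + 1) n, v (n - i) ≤ ∑' k, v (k + 1) := by
    rw [Finset.sum_Ico_eq_sum_range]
    have heq : ∑ t ∈ Finset.range (n - (j + 1)), v (n - (j + 1 + t)) =
        ∑ t ∈ Finset.range (n - (j + 1)), v (n - (j + 1) - 1 - t + 1) := by
      apply Finset.sum_congr rfl
      intro t ht
      simp only [Finset.mem_range] at ht
      congr 1
      omega
    rw [heq, Finset.sum_range_reflect (fun t => v (t + 1))]
    exact Summable.sum_le_tsum _ (fun k _ => hv0 _) hsum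
  have hsplit : ∑ i ∈ Finset.range n, (if i ≤ j then v (j - i) else v (n - i)) =
      ∑ i ∈ Finset.range (j + 1), v (j - i) + ∑ i ∈ Finset.Ico (j + 1) n, v (n - i) := by
    rw [Finset.range_eq_Ico, ← Finset.sum_Ico_consecutive _ (Nat.zero_le (j + 1)) hjn]
    congr 1
    · rw [← Finset.range_eq_Ico]
      apply Finset.sum_congr rfl
      intro i hi
      simp only [Finset.mem_range] at hi
      rw [if_pos (by omega)]
    · apply Finset.sum_congr rfl
      intro i hi
      simp only [Finset.mem_Ico] at hi
      rw [if_neg (by omega)]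
  calc |birk2 h n ω - birk2 h n τ|
      = |∑ i ∈ Finset.range n, (h (shift2^[i] ω) - h (shift2^[i] τ))| := by
        rw [birk2, birk2, Finset.sum_sub_distrib]
    _ ≤ ∑ i ∈ Finset.range n, |h (shift2^[i] ω) - h (shift2^[i] τ)| :=
        Finset.abs_sum_le_sum_abs _ _
    _ ≤ ∑ i ∈ Finset.range n, (if i ≤ j then v (j - i) else v (n - i)) :=
        Finset.sum_le_sum (fun i _ => key i)
    _ ≤ 2 * (∑' k, v (k + 1)) + v 0 := by rw [hsplit]; linarith

/-- For potentials with summable variations, Birkhoff sums over the union of two cylinders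
whose words differ in exactly one coordinate differ by at most the uniform constant
`C = 2 max(∑_{k≥1} var_k φ, ∑_{k≥1} var_k ψ) + 2 max(var_0 φ, var_0 ψ)`. -/
theorem neighbours_birkhoff_bound (φ ψ : (ℕ → Fin 2) → ℝ) (varφ varψ : ℕ → ℝ)
    (hvarφ0 : ∀ k, 0 ≤ varφ k) (hvarψ0 : ∀ k, 0 ≤ varψ k)
    (hφ : ∀ k : ℕ, ∀ a b : ℕ → Fin 2, (∀ m < k, a m = b m) → |φ a - φ b| ≤ varφ k)
    (hψ : ∀ k : ℕ, ∀ a b : ℕ → Fin 2, (∀ m < k, a m = b m) → |ψ a - ψ b| ≤ varψ k)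
    (hφsum : Summable (fun k : ℕ => varφ (k + 1)))
    (hψsum : Summable (fun k : ℕ => varψ (k + 1)))
    (n : ℕ) (x y : Fin n → Fin 2) (j : Fin n)
    (hdiff : x j ≠ y j ∧ ∀ m : Fin n, m ≠ j → x m = y m)
    (ω τ : ℕ → Fin 2)
    (hω : (∀ m : Fin n, ω m = x m) ∨ (∀ m : Fin n, ω m = y m))
    (hτ : (∀ m : Fin n, τ m = x m) ∨ (∀ m : Fin n, τ m = y m)) :
    |birk2 φ n ω - birk2 φ n τ| ≤
        2 * max (∑' k : ℕ, varφ (k + 1)) (∑' k : ℕ, varψ (k + 1)) +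
          2 * max (varφ 0) (varψ 0) ∧
      |birk2 ψ n ω - birk2 ψ n τ| ≤
        2 * max (∑' k : ℕ, varφ (k + 1)) (∑' k : ℕ, varψ (k + 1)) +
          2 * max (varφ 0) (varψ 0) := by
  have hagree : ∀ m, m < n → m ≠ (j : ℕ) → ω m = τ m := by
    intro m hm hmj
    have hm' : (⟨m, hm⟩ : Fin n) ≠ j := Fin.ne_of_val_ne hmj
    have hxy := hdiff.2 ⟨m, hm⟩ hm'
    rcases hω with hω | hω <;> rcases hτ with hτ | hτ
    · rw [hω ⟨m, hm⟩, hτ ⟨m, hm⟩]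
    · rw [hω ⟨m, hm⟩, hτ ⟨m, hm⟩]; exact hxy
    · rw [hω ⟨m, hm⟩, hτ ⟨m, hm⟩]; exact hxy.symm
    · rw [hω ⟨m, hm⟩, hτ ⟨m, hm⟩]
  have hjn : (j : ℕ) < n := j.isLt
  have hφb := birk_helper φ varφ hvarφ0 hφ hφsum n j hjn ω τ hagree
  have hψb := birk_helper ψ varψ hvarψ0 hψ hψsum n j hjn ω τ hagree
  have m1 : (∑' k, varφ (k + 1)) ≤ max (∑' k : ℕ, varφ (k + 1)) (∑' k : ℕ, varψ (k + 1)) :=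
    le_max_left _ _
  have m2 : (∑' k, varψ (k + 1)) ≤ max (∑' k : ℕ, varφ (k + 1)) (∑' k : ℕ, varψ (k + 1)) :=
    le_max_right _ _
  have m3 : varφ 0 ≤ max (varφ 0) (varψ 0) := le_max_left _ _
  have m4 : varψ 0 ≤ max (varφ 0) (varψ 0) := le_max_right _ _
  have m5 : 0 ≤ max (varφ 0) (varψ 0) := le_trans (hvarφ0 0) m3
  constructor <;> [linarith; linarith]
end
end

section
/- Let α_D be the dyadic partition with lengths a_n = 2^{−n}, and for each k let α_k be the partition with a_n(α_k) = 2^{−n} for n ∉ {k, k+1}, a_k(α_k) = 2^{−k²} and a_{k+1}(α_k) = 2^{−k} + 2^{−(k+1)} − 2^{−k²}. Then inf{ log a_n(α_D) / log a_n(α_k) : n ∈ ℕ } = 1/k for every k ≥ 2. -/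
noncomputable section

/-- The lengths of the modified partition `α_k`: `a_n(α_k) = 2^{-n}` for `n ∉ {k,k+1}`,
`a_k(α_k) = 2^{-k²}` and `a_{k+1}(α_k) = 2^{-k} + 2^{-(k+1)} - 2^{-k²}`. -/
def aK (k n : ℕ) : ℝ :=
  if n = k then (2 : ℝ) ^ (-((k : ℝ)) ^ 2)
  else if n = k + 1 then
    (2 : ℝ) ^ (-(k : ℝ)) + (2 : ℝ) ^ (-((k : ℝ) + 1)) - (2 : ℝ) ^ (-((k : ℝ)) ^ 2)
  else (2 : ℝ) ^ (-(n : ℝ))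

/-- The Hölder exponent computation:
`inf_{n ≥ 1} log a_n(α_D) / log a_n(α_k) = 1/k` for `k ≥ 2`, where `a_n(α_D) = 2^{-n}`. -/
theorem holder_exponent_inf (k : ℕ) (hk : 2 ≤ k) :
    (⨅ n : ℕ, Real.log ((2 : ℝ) ^ (-((n : ℝ) + 1))) / Real.log (aK k (n + 1))) =
      1 / (k : ℝ) := by
  have hL : 0 < Real.log 2 := Real.log_pos (by norm_num)
  set L := Real.log 2 with hLdef
  have hkR : (2:ℝ) ≤ (k:ℝ) := by exact_mod_cast hk
  have hk0 : (0:ℝ) < (k:ℝ) := by linarith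
  have hnum : ∀ n : ℕ, Real.log ((2 : ℝ) ^ (-((n : ℝ) + 1))) = -((n:ℝ)+1) * L := by
    intro n
    rw [Real.log_rpow (by norm_num)]
  -- value at indices with n+1 = k
  have hval : ∀ n : ℕ, n + 1 = k →
      Real.log ((2 : ℝ) ^ (-((n : ℝ) + 1))) / Real.log (aK k (n + 1)) = 1 / (k:ℝ) := by
    intro n h
    have hcast : ((n:ℝ)+1) = (k:ℝ) := by exact_mod_cast congrArg (Nat.cast (R := ℝ)) h
    rw [hnum, hcast]
    simp only [aK, if_pos h]
    rw [Real.log_rpow (by norm_num)]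
    have hkne : (k:ℝ) ≠ 0 := ne_of_gt hk0
    have hLne : L ≠ 0 := ne_of_gt hL
    field_simp
    ring
  have hbound : ∀ n : ℕ, 1 / (k:ℝ) ≤
      Real.log ((2 : ℝ) ^ (-((n : ℝ) + 1))) / Real.log (aK k (n + 1)) := by
    intro n
    rcases eq_or_ne (n+1) k with h | h
    · rw [hval n h]
    rcases eq_or_ne (n+1) (k+1) with h2 | h2
    · -- n = k, the modified interval
      have hcast : ((n:ℝ)+1) = (k:ℝ)+1 := by exact_mod_cast congrArg (Nat.cast (R := ℝ)) h2
      rw [hnum, hcast]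
      simp only [aK, if_neg h, if_pos h2]
      set a : ℝ := (2 : ℝ) ^ (-(k : ℝ)) + (2 : ℝ) ^ (-((k : ℝ) + 1)) - (2 : ℝ) ^ (-((k : ℝ)) ^ 2)
        with ha
      have hsq : (2:ℝ)^(-((k:ℝ))^2) ≤ (2:ℝ)^(-(k:ℝ)) :=
        Real.rpow_le_rpow_of_exponent_le (by norm_num) (by nlinarith)
      have h1 : (2:ℝ)^(-((k:ℝ)+1)) ≤ a := by rw [ha]; linarith
      have e3 : (2:ℝ)^(-(2:ℝ)) = 1/4 := by
        rw [show (-(2:ℝ)) = ((-2:ℤ):ℝ) by norm_num, Real.rpow_intCast]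
        norm_num
      have e1 : (2:ℝ)^(-(k:ℝ)) ≤ (2:ℝ)^(-(2:ℝ)) :=
        Real.rpow_le_rpow_of_exponent_le one_le_two (by linarith)
      have e2 : (2:ℝ)^(-((k:ℝ)+1)) ≤ (2:ℝ)^(-(2:ℝ)) :=
        Real.rpow_le_rpow_of_exponent_le one_le_two (by linarith)
      have e4 : (0:ℝ) < (2:ℝ)^(-((k:ℝ))^2) := Real.rpow_pos_of_pos (by norm_num) _
      have h2' : a < 1 := by rw [ha]; rw [e3] at e1 e2; linarith
      have hpos : 0 < a := lt_of_lt_of_le (Real.rpow_pos_of_pos (by norm_num) _) h1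
      have hlogneg : Real.log a < 0 := Real.log_neg hpos h2'
      have hloglb : -((k:ℝ)+1) * L ≤ Real.log a := by
        have := Real.log_le_log (Real.rpow_pos_of_pos (by norm_num) _) h1
        rwa [Real.log_rpow (by norm_num)] at this
      have heq : (-((k:ℝ)+1) * L) / Real.log a = (((k:ℝ)+1) * L) / (-Real.log a) := by
        ring
      rw [heq, div_le_div_iff₀ hk0 (by linarith)]
      nlinarith
    · -- unchanged intervals
      simp only [aK, if_neg h, if_neg h2]
      have hcast : (((n+1:ℕ)):ℝ) = (n:ℝ)+1 := by push_cast; ring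
      rw [hcast, hnum]
      have hne : -((n:ℝ)+1) * L ≠ 0 := by
        have : (0:ℝ) ≤ (n:ℝ) := Nat.cast_nonneg n
        nlinarith
      rw [div_self hne, div_le_one hk0]
      linarith
  have hbdd : BddBelow (Set.range fun n : ℕ =>
      Real.log ((2 : ℝ) ^ (-((n : ℝ) + 1))) / Real.log (aK k (n + 1))) := by
    refine ⟨1 / (k:ℝ), ?_⟩
    rintro _ ⟨n, rfl⟩
    exact hbound n
  apply le_antisymm
  · calc (⨅ n : ℕ, Real.log ((2 : ℝ) ^ (-((n : ℝ) + 1))) / Real.log (aK k (n + 1)))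
        ≤ Real.log ((2 : ℝ) ^ (-(((k-1 : ℕ) : ℝ) + 1))) / Real.log (aK k ((k-1) + 1)) :=
          ciInf_le hbdd (k-1)
      _ = 1 / (k:ℝ) := hval (k-1) (by omega)
  · exact le_ciInf hbound
end
end

section
/- Let φ, ψ : Σ_N → ℝ be Hölder potentials on the full shift on N symbols, with ψ strictly negative, and define Z(q) = P(q(φ−ψ) + tψ) for fixed t. Suppose Z is differentiable with Z'(q) = ∫(φ−ψ) dμ_q (μ_q the Gibbs state of q(φ−ψ)+tψ), Z(q) → ∞ as q → ±∞, and inf_q Z(q) > 0. Then there exists q₁ with Z'(q₁) = 0, and the Gibbs measure μ = μ_{q₁} satisfies ∫ φ dμ = ∫ ψ dμ and h(μ,σ) + t ∫ ψ dμ > 0, hence h(μ,σ)/(−∫ψ dμ) > t. -/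
open Filter MeasureTheory

noncomputable section

/-- The left shift on the full shift over `N` symbols. -/
def shiftF {N : ℕ} (x : ℕ → Fin N) : ℕ → Fin N := fun n => x (n + 1)

/-- Lemma 4.6: if the pressure function `Z(q) = P(q(φ-ψ) + tψ)` has derivative
`Z'(q) = ∫(φ-ψ) dμ_q`, tends to `∞` at `±∞` and has strictly positive infimum, then there
is `q₁` with `Z'(q₁) = 0`, and the Gibbs state `μ = μ_{q₁}` satisfies `∫φ dμ = ∫ψ dμ` and
`h(μ,σ) + t ∫ψ dμ > 0`, hence `h(μ,σ)/(-∫ψ dμ) > t`. -/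
theorem pressure_minimum_gibbs {N : ℕ} (hN : 0 < N) (φ ψ : (ℕ → Fin N) → ℝ)
    (hφc : Continuous φ) (hψc : Continuous ψ)
    (hφHolder : ∃ C > (0:ℝ), ∃ δ ∈ Set.Ioo (0:ℝ) 1, ∀ n : ℕ, 1 ≤ n →
      ∀ x y : ℕ → Fin N, (∀ m < n, x m = y m) → |φ x - φ y| ≤ C * δ ^ n)
    (hψHolder : ∃ C > (0:ℝ), ∃ δ ∈ Set.Ioo (0:ℝ) 1, ∀ n : ℕ, 1 ≤ n →
      ∀ x y : ℕ → Fin N, (∀ m < n, x m = y m) → |ψ x - ψ y| ≤ C * δ ^ n)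
    (hψneg : ∀ x, ψ x < 0) (t : ℝ)
    (μ : ℝ → Measure (ℕ → Fin N)) (hprob : ∀ q, IsProbabilityMeasure (μ q))
    (entH : Measure (ℕ → Fin N) → ℝ)
    (Z : ℝ → ℝ)
    (hZdef : ∀ q, Z q = entH (μ q) + ∫ x, (q * (φ x - ψ x) + t * ψ x) ∂(μ q))
    (hZderiv : ∀ q, HasDerivAt Z (∫ x, (φ x - ψ x) ∂(μ q)) q)
    (htop : Tendsto Z atTop atTop) (hbot : Tendsto Z atBot atTop)
    (hinf : ∃ ε > (0:ℝ), ∀ q, ε ≤ Z q) :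
    ∃ q₁ : ℝ, (∫ x, (φ x - ψ x) ∂(μ q₁)) = 0 ∧
      (∫ x, φ x ∂(μ q₁)) = ∫ x, ψ x ∂(μ q₁) ∧
      0 < entH (μ q₁) + t * ∫ x, ψ x ∂(μ q₁) ∧
      t < entH (μ q₁) / (-∫ x, ψ x ∂(μ q₁)) := by
  haveI : Nonempty (Fin N) := Fin.pos_iff_nonempty.mp hN
  haveI : Nonempty (ℕ → Fin N) := inferInstance
  -- Z is continuous
  have hZcont : Continuous Z := by
    apply continuous_iff_continuousAt.mpr
    intro q
    exact (hZderiv q).continuousAt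
  -- Z tends to ∞ along the cocompact filter, hence has a global minimum
  have hco : Tendsto Z (cocompact ℝ) atTop := by
    rw [cocompact_eq_atBot_atTop]
    exact Tendsto.sup hbot htop
  obtain ⟨q₁, hq₁⟩ := hZcont.exists_forall_le hco
  refine ⟨q₁, ?_⟩
  haveI := hprob q₁
  -- integrability of φ and ψ
  have hφint : Integrable φ (μ q₁) :=
    hφc.integrable_of_hasCompactSupport (HasCompactSupport.of_compactSpace φ)
  have hψint : Integrable ψ (μ q₁) :=
    hψc.integrable_of_hasCompactSupport (HasCompactSupport.of_compactSpace ψ)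
  -- derivative is zero at the minimum
  have hmin : IsLocalMin Z q₁ := Filter.Eventually.of_forall hq₁
  have hderiv0 : (∫ x, (φ x - ψ x) ∂(μ q₁)) = 0 := hmin.hasDerivAt_eq_zero (hZderiv q₁)
  have hsub : (∫ x, (φ x - ψ x) ∂(μ q₁)) = (∫ x, φ x ∂(μ q₁)) - ∫ x, ψ x ∂(μ q₁) :=
    integral_sub hφint hψint
  have heq : (∫ x, φ x ∂(μ q₁)) = ∫ x, ψ x ∂(μ q₁) := by
    have := hsub ▸ hderiv0
    linarith
  -- split the integral in Z(q₁)
  have hZ1 : Z q₁ = entH (μ q₁) + q₁ * (∫ x, (φ x - ψ x) ∂(μ q₁)) + t * ∫ x, ψ x ∂(μ q₁) := by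
    rw [hZdef q₁]
    have h := integral_add (μ := μ q₁) (f := fun x => q₁ * (φ x - ψ x))
      (g := fun x => t * ψ x) (((hφint.sub hψint).const_mul q₁ : _)) (hψint.const_mul t)
    rw [h, integral_const_mul, integral_const_mul]
    ring
  obtain ⟨ε, hε, hεZ⟩ := hinf
  have hpos : 0 < entH (μ q₁) + t * ∫ x, ψ x ∂(μ q₁) := by
    have h1 := hεZ q₁
    rw [hZ1, hderiv0] at h1
    linarith
  -- ∫ ψ < 0
  have hψlt : (∫ x, ψ x ∂(μ q₁)) < 0 := by
    obtain ⟨x₀, _, hx₀⟩ := isCompact_univ.exists_isMaxOn Set.univ_nonempty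
      hψc.continuousOn
    have hle : ∀ x, ψ x ≤ ψ x₀ := fun x => hx₀ (Set.mem_univ x)
    have : (∫ x, ψ x ∂(μ q₁)) ≤ ∫ _, ψ x₀ ∂(μ q₁) :=
      integral_mono hψint (integrable_const _) hle
    rw [integral_const, probReal_univ, one_smul] at this
    exact lt_of_le_of_lt this (hψneg x₀)
  refine ⟨hderiv0, heq, hpos, ?_⟩
  rw [lt_div_iff₀ (by linarith : (0:ℝ) < -∫ x, ψ x ∂(μ q₁))]
  nlinarith
end
end
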